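/- Let φ be a sequence of pivots applicable to a simple graph G and let S = sup(φ) be its support. Then det(G[S]) = 1 over GF(2). -/

import Mathlib

set_option linter.unusedSectionVars false

variable {V : Type*} [Fintype V] [DecidableEq V]

/-- Local complementation at a vertex `w`: complement the edges within `N_G(w)`. -/
def SimpleGraph.localComp (G : SimpleGraph V) (w : V) : SimpleGraph V where
  Adj x y := x ≠ y ∧ Xor' (G.Adj x y) (G.Adj x w ∧ G.Adj y w)
  symm := by
    constructor
    intro x y ⟨hne, hx⟩
    refine ⟨hne.symm, ?_⟩
    have h1 := G.adj_comm x y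
    unfold Xor' Xor at hx ⊢
    tauto
  loopless := by constructor; intro x ⟨h, _⟩; exact h rfl

/-- `x ∼_G y` : `x = y` or `{x,y}` is an edge of `G`. -/
def SimpleGraph.nbr (G : SimpleGraph V) (x y : V) : Prop := x = y ∨ G.Adj x y

theorem SimpleGraph.nbr_comm (G : SimpleGraph V) (x y : V) : G.nbr x y ↔ G.nbr y x :=
  or_congr eq_comm (G.adj_comm x y)

private theorem xor_swap_right (a b c : Prop) : Xor' (Xor' a b) c ↔ Xor' (Xor' a c) b := by
  unfold Xor' Xor; tauto

/-- The pivot `G[uv]` of `G` on an edge `{u,v}`, characterized by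
`x ∼_{G[uv]} y ⟺ (x ∼_G y) XOR ((x ∼_G u) ∧ (y ∼_G v)) XOR ((x ∼_G v) ∧ (y ∼_G u))`. -/
def SimpleGraph.pivot (G : SimpleGraph V) (u v : V) : SimpleGraph V where
  Adj x y := x ≠ y ∧
    Xor' (Xor' (G.nbr x y) (G.nbr x u ∧ G.nbr y v)) (G.nbr x v ∧ G.nbr y u)
  symm := by
    constructor
    intro x y ⟨hne, hx⟩
    refine ⟨hne.symm, ?_⟩
    show Xor' (Xor' (G.nbr y x) (G.nbr y u ∧ G.nbr x v)) (G.nbr y v ∧ G.nbr x u)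
    rw [G.nbr_comm y x, and_comm (a := G.nbr y u) (b := G.nbr x v),
      and_comm (a := G.nbr y v) (b := G.nbr x u)]
    exact (xor_swap_right _ _ _).mp hx
  loopless := by constructor; intro x ⟨h, _⟩; exact h rfl

/-- Determinant over GF(2) of the adjacency matrix of the subgraph of `G` induced by `S`. -/
noncomputable def gdet (G : SimpleGraph V) (S : Finset V) : ZMod 2 := by
  classical
  exact Matrix.det (Matrix.of fun i j : S => if G.Adj i j then (1 : ZMod 2) else 0)

/-- Apply a sequence of pivots (left to right). -/
def applyPivots (G : SimpleGraph V) : List (V × V) → SimpleGraph V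
  | [] => G
  | p :: φ => applyPivots (G.pivot p.1 p.2) φ

/-- A sequence of pivots is applicable when each pair is an edge of the graph
obtained by applying all preceding pivots. -/
def PivotsApplicable (G : SimpleGraph V) : List (V × V) → Prop
  | [] => True
  | p :: φ => G.Adj p.1 p.2 ∧ PivotsApplicable (G.pivot p.1 p.2) φ

/-- The support of a sequence of pivots: vertices occurring an odd number of times. -/
def pivotSupport (φ : List (V × V)) : Finset V :=
  Finset.univ.filter fun x => Odd ((φ.flatMap fun p => [p.1, p.2]).count x)

/-- A sequence of pivots is reduced if its pivot vertices are pairwise distinct. -/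
def ReducedSeq (φ : List (V × V)) : Prop := (φ.flatMap fun p => [p.1, p.2]).Nodup

/-- The number of perfect matchings of the subgraph of `G` induced by `S`:
sets of edges of `G` inside `S` such that every vertex of `S` lies in exactly one of them. -/
noncomputable def pmCount (G : SimpleGraph V) (S : Finset V) : ℕ := by
  classical
  exact (Finset.univ.filter fun P : Finset (Sym2 V) =>
    (∀ e ∈ P, e ∈ G.edgeSet ∧ ∀ v ∈ e, v ∈ S) ∧
    ∀ v ∈ S, ∃! e, e ∈ P ∧ v ∈ e).card

section AuxProof

open Matrix Finset
open scoped Classical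

/-- Adjacency matrix entry over GF(2). -/
noncomputable def aM (G : SimpleGraph V) (x y : V) : ZMod 2 :=
  if G.Adj x y then 1 else 0

/-- Closed-neighbourhood ("nbr") entry over GF(2). -/
noncomputable def nv (G : SimpleGraph V) (x y : V) : ZMod 2 :=
  (if x = y then 1 else 0) + aM G x y

lemma aM_comm (G : SimpleGraph V) (x y : V) : aM G x y = aM G y x := by
  simp [aM, G.adj_comm]

lemma aM_self (G : SimpleGraph V) (x : V) : aM G x x = 0 := by
  simp [aM]

lemma htwo : ∀ t : ZMod 2, t + t = 0 := by decide

lemma gdet_eq (G : SimpleGraph V) (S : Finset V) :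
    gdet G S = (Matrix.of fun i j : S => aM G i j).det := by
  rfl

lemma ite_xor (a b : Prop) [Decidable a] [Decidable b] :
    (if Xor' a b then (1 : ZMod 2) else 0) = (if a then 1 else 0) + (if b then 1 else 0) := by
  by_cases ha : a <;> by_cases hb : b <;> simp [Xor', ha, hb] <;> decide

lemma ite_and' (a b : Prop) [Decidable a] [Decidable b] :
    (if a ∧ b then (1 : ZMod 2) else 0) = (if a then 1 else 0) * (if b then 1 else 0) := by
  by_cases ha : a <;> by_cases hb : b <;> simp [ha, hb]

lemma ite_nbr (G : SimpleGraph V) (x y : V) :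
    (if G.nbr x y then (1 : ZMod 2) else 0) = nv G x y := by
  unfold nv aM
  by_cases hxy : x = y
  · subst hxy; simp [SimpleGraph.nbr]
  · by_cases ha : G.Adj x y <;> simp [SimpleGraph.nbr, hxy, ha]

lemma nv_ne (G : SimpleGraph V) {x y : V} (h : x ≠ y) : nv G x y = aM G x y := by
  simp [nv, h]

lemma pivot_aM (G : SimpleGraph V) (u v x y : V) :
    aM (G.pivot u v) x y = aM G x y + nv G x u * nv G y v + nv G x v * nv G y u := by
  rcases eq_or_ne x y with rfl | hxy
  · have h1 : aM (G.pivot u v) x x = 0 := aM_self _ _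
    have h2 : aM G x x = 0 := aM_self _ _
    rw [h1, h2, mul_comm (nv G x v) (nv G x u), zero_add, htwo]
  · show (if (G.pivot u v).Adj x y then (1 : ZMod 2) else 0) = _
    have : (G.pivot u v).Adj x y ↔
        Xor' (Xor' (G.nbr x y) (G.nbr x u ∧ G.nbr y v)) (G.nbr x v ∧ G.nbr y u) := by
      constructor
      · rintro ⟨-, h⟩; exact h
      · intro h; exact ⟨hxy, h⟩
    rw [if_congr this rfl rfl, ite_xor, ite_xor, ite_and', ite_and']
    simp only [ite_nbr]
    rw [nv_ne _ hxy]


section Entries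

lemma twoz : (2 : ZMod 2) = 0 := rfl

variable {G : SimpleGraph V} {u v : V}

lemma nv_uv (h : G.Adj u v) : nv G u v = 1 := by
  rw [nv_ne _ (G.ne_of_adj h)]; simp [aM, h]

lemma nv_vu (h : G.Adj u v) : nv G v u = 1 := by
  rw [nv_ne _ (G.ne_of_adj h).symm]; simp [aM, h.symm]

lemma nv_self (G : SimpleGraph V) (x : V) : nv G x x = 1 := by
  simp [nv, aM_self]

lemma pA_xy {x y : V} (hxu : x ≠ u) (hxv : x ≠ v) (hyu : y ≠ u) (hyv : y ≠ v) :
    aM (G.pivot u v) x y = aM G x y + aM G x u * aM G y v + aM G x v * aM G y u := by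
  rw [pivot_aM, nv_ne _ hxu, nv_ne _ hxv, nv_ne _ hyu, nv_ne _ hyv]

lemma pA_xu (h : G.Adj u v) {x : V} (hxu : x ≠ u) (hxv : x ≠ v) :
    aM (G.pivot u v) x u = aM G x v := by
  rw [pivot_aM, nv_ne _ hxu, nv_ne _ hxv, nv_uv h, nv_self]
  ring_nf
  simp [twoz]

lemma pA_xv (h : G.Adj u v) {x : V} (hxu : x ≠ u) (hxv : x ≠ v) :
    aM (G.pivot u v) x v = aM G x u := by
  rw [pivot_aM, nv_ne _ hxu, nv_ne _ hxv, nv_vu h, nv_self]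
  ring_nf
  simp [twoz]

lemma pA_uv (h : G.Adj u v) : aM (G.pivot u v) u v = 1 := by
  rw [pivot_aM, nv_self, nv_self, nv_uv h, nv_vu h]
  have : aM G u v = 1 := by simp [aM, h]
  rw [this]; decide

lemma pA_vu (h : G.Adj u v) : aM (G.pivot u v) v u = 1 := by
  rw [aM_comm, pA_uv h]

lemma pA_uy (h : G.Adj u v) {y : V} (hyu : y ≠ u) (hyv : y ≠ v) :
    aM (G.pivot u v) u y = aM G y v := by
  rw [aM_comm, pA_xu h hyu hyv]

lemma pA_vy (h : G.Adj u v) {y : V} (hyu : y ≠ u) (hyv : y ≠ v) :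
    aM (G.pivot u v) v y = aM G y u := by
  rw [aM_comm, pA_xv h hyu hyv]

lemma nv_pivot_u (h : G.Adj u v) (x : V) : nv (G.pivot u v) x u = nv G x v := by
  by_cases hxu : x = u
  · subst hxu
    rw [nv_self, nv_uv h]
  by_cases hxv : x = v
  · subst hxv
    rw [nv_ne _ (G.ne_of_adj h).symm, aM_comm, pA_uv h, nv_self]
  · rw [nv_ne _ hxu, nv_ne _ hxv, pA_xu h hxu hxv]

lemma nv_pivot_v (h : G.Adj u v) (x : V) : nv (G.pivot u v) x v = nv G x u := by
  by_cases hxv : x = v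
  · subst hxv
    rw [nv_self, nv_vu h]
  by_cases hxu : x = u
  · subst hxu
    rw [nv_ne _ (G.ne_of_adj h), pA_uv h, nv_self]
  · rw [nv_ne _ hxv, nv_ne _ hxu, pA_xv h hxu hxv]

lemma pivot_pivot_aM (h : G.Adj u v) (x y : V) :
    aM ((G.pivot u v).pivot u v) x y = aM G x y := by
  rw [pivot_aM, nv_pivot_u h, nv_pivot_v h, nv_pivot_u h, nv_pivot_v h, pivot_aM]
  ring_nf
  simp [twoz]

lemma pivot_adj_uv (h : G.Adj u v) : (G.pivot u v).Adj u v := by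
  have := pA_uv h
  by_contra hc
  simp [aM, hc] at this

lemma pivot_pivot_adj (h : G.Adj u v) (x y : V) :
    ((G.pivot u v).pivot u v).Adj x y ↔ G.Adj x y := by
  have hv := pivot_pivot_aM h x y
  unfold aM at hv
  constructor <;> intro ha
  · by_contra hb; rw [if_pos ha, if_neg hb] at hv; exact one_ne_zero hv
  · by_contra hb; rw [if_neg hb, if_pos ha] at hv; exact one_ne_zero hv.symm

lemma gdet_congr {G H : SimpleGraph V} (hGH : ∀ x y, G.Adj x y ↔ H.Adj x y) (S : Finset V) :
    gdet G S = gdet H S := by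
  rw [gdet_eq, gdet_eq]
  congr 1
  ext i j
  simp only [Matrix.of_apply, aM]
  exact if_congr (hGH i j) rfl rfl

end Entries

section Cases

open Matrix

/-- Equiv between `Z ⊕ Unit` and `insert w Z` for `w ∉ Z`. -/
def insertEquiv (Z : Finset V) (w : V) (hw : w ∉ Z) : (↥Z ⊕ Unit) ≃ ↥(insert w Z) where
  toFun x := match x with
    | .inl z => ⟨z, Finset.mem_insert_of_mem z.2⟩
    | .inr _ => ⟨w, Finset.mem_insert_self w Z⟩
  invFun t := if h : (t : V) = w then .inr () else
    .inl ⟨t, by rcases Finset.mem_insert.mp t.2 with h' | h'; exact absurd h' h; exact h'⟩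
  left_inv := by
    rintro (⟨z, hz⟩ | ⟨⟩)
    · have : z ≠ w := fun h => hw (h ▸ hz)
      simp [this]
    · simp
  right_inv := by
    rintro ⟨t, ht⟩
    by_cases h : t = w <;> simp [h]

/-- Equiv between `Z ⊕ Fin 2` and `insert u (insert v Z)` for distinct `u v ∉ Z`. -/
def pairEquiv (Z : Finset V) (u v : V) (huv : u ≠ v) (hu : u ∉ Z) (hv : v ∉ Z) :
    (↥Z ⊕ Fin 2) ≃ ↥(insert u (insert v Z)) where
  toFun x := match x with
    | .inl z => ⟨z, Finset.mem_insert_of_mem (Finset.mem_insert_of_mem z.2)⟩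
    | .inr j => if j = 0 then ⟨u, Finset.mem_insert_self _ _⟩
        else ⟨v, Finset.mem_insert_of_mem (Finset.mem_insert_self _ _)⟩
  invFun t :=
    if h1 : (t : V) = u then .inr 0
    else if h2 : (t : V) = v then .inr 1
    else .inl ⟨t, by
      rcases Finset.mem_insert.mp t.2 with h | h
      · exact absurd h h1
      rcases Finset.mem_insert.mp h with h | h
      · exact absurd h h2
      · exact h⟩
  left_inv := by
    rintro (⟨z, hz⟩ | j)
    · have h1 : z ≠ u := fun h => hu (h ▸ hz)
      have h2 : z ≠ v := fun h => hv (h ▸ hz)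
      simp [h1, h2]
    · fin_cases j <;> simp [huv, huv.symm]
  right_inv := by
    rintro ⟨t, ht⟩
    by_cases h1 : t = u
    · simp [h1]
    by_cases h2 : t = v <;> simp [h1, h2, (Ne.symm huv)]

variable {G : SimpleGraph V} {u v : V}

lemma case2 (h : G.Adj u v) (Z : Finset V) (hu : u ∉ Z) (hv : v ∉ Z) :
    gdet (G.pivot u v) (insert u (insert v Z)) = gdet G Z := by
  have hne : u ≠ v := G.ne_of_adj h
  set A : V → V → ZMod 2 := aM G with hA
  set MZ : Matrix Z Z (ZMod 2) := Matrix.of (fun x y : Z => A x y) with hMZ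
  set M : Matrix Z Z (ZMod 2) :=
    Matrix.of (fun x y : Z => A x y + A x u * A y v + A x v * A y u) with hM
  set B : Matrix Z (Fin 2) (ZMod 2) :=
    Matrix.of (fun (x : Z) (j : Fin 2) => if j = 0 then A x v else A x u) with hB
  set C : Matrix (Fin 2) Z (ZMod 2) :=
    Matrix.of (fun (j : Fin 2) (y : Z) => if j = 0 then A y v else A y u) with hC
  set P : Matrix (Fin 2) (Fin 2) (ZMod 2) := Matrix.of ![![0, 1], ![1, 0]] with hP
  haveI hPinv : Invertible P := ⟨P, by decide, by decide⟩
  have key : ∀ (x : V), x ∈ Z → x ≠ u ∧ x ≠ v := fun x hx =>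
    ⟨fun hh => hu (hh ▸ hx), fun hh => hv (hh ▸ hx)⟩
  have h1 : gdet (G.pivot u v) (insert u (insert v Z)) = (fromBlocks M B C P).det := by
    rw [gdet_eq, ← Matrix.det_submatrix_equiv_self (pairEquiv Z u v hne hu hv)]
    congr 1
    ext i j
    rcases i with x | i <;> rcases j with y | j
    · obtain ⟨hxu, hxv⟩ := key x x.2
      obtain ⟨hyu, hyv⟩ := key y y.2
      simp [pairEquiv, pA_xy hxu hxv hyu hyv, hM, hA]
    · obtain ⟨hxu, hxv⟩ := key x x.2
      fin_cases j <;>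
        simp [pairEquiv, pA_xu h hxu hxv, pA_xv h hxu hxv, hB, hA]
    · obtain ⟨hyu, hyv⟩ := key y y.2
      fin_cases i <;>
        simp [pairEquiv, pA_uy h hyu hyv, pA_vy h hyu hyv, hC, hA]
    · fin_cases i <;> fin_cases j <;>
        simp [pairEquiv, hP, aM_self, pA_uv h, pA_vu h]
  have h2 : M - B * ⅟P * C = MZ := by
    have hPP : (⅟P : Matrix (Fin 2) (Fin 2) (ZMod 2)) = P := invOf_eq_right_inv (by decide)
    rw [hPP]
    ext x y
    simp only [Matrix.sub_apply, Matrix.mul_apply, Fin.sum_univ_two, hM, hB, hC, hP,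
      Matrix.of_apply, hMZ, Matrix.cons_val', Matrix.cons_val_zero, Matrix.cons_val_one,
      Matrix.head_cons, Matrix.head_fin_const, Matrix.empty_val', Matrix.cons_val_fin_one]
    norm_num
    try ring
  have h3 : P.det = 1 := by decide
  rw [h1, Matrix.det_fromBlocks₂₂, h2, h3, one_mul, gdet_eq, hMZ, hA]

lemma case3 (h : G.Adj u v) (Z : Finset V) (hu : u ∉ Z) (hv : v ∉ Z) :
    gdet (G.pivot u v) (insert u Z) = gdet G (insert v Z) := by
  have hne : u ≠ v := G.ne_of_adj h
  set A : V → V → ZMod 2 := aM G with hA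
  set MZ : Matrix Z Z (ZMod 2) := Matrix.of (fun x y : Z => A x y) with hMZ
  set M : Matrix Z Z (ZMod 2) :=
    Matrix.of (fun x y : Z => A x y + A x u * A y v + A x v * A y u) with hM
  set cb : Matrix Z Unit (ZMod 2) := Matrix.of (fun (x : Z) (_ : Unit) => A x v) with hcb
  set rb : Matrix Unit Z (ZMod 2) := Matrix.of (fun (_ : Unit) (y : Z) => A y v) with hrb
  set ca : Matrix Z Unit (ZMod 2) := Matrix.of (fun (x : Z) (_ : Unit) => A x u) with hca
  set ra : Matrix Unit Z (ZMod 2) := Matrix.of (fun (_ : Unit) (y : Z) => A y u) with hra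
  have key : ∀ (x : V), x ∈ Z → x ≠ u ∧ x ≠ v := fun x hx =>
    ⟨fun hh => hu (hh ▸ hx), fun hh => hv (hh ▸ hx)⟩
  have h1 : gdet (G.pivot u v) (insert u Z) =
      (fromBlocks M cb rb (0 : Matrix Unit Unit (ZMod 2))).det := by
    rw [gdet_eq, ← Matrix.det_submatrix_equiv_self (insertEquiv Z u hu)]
    congr 1
    ext i j
    rcases i with x | i <;> rcases j with y | j
    · obtain ⟨hxu, hxv⟩ := key x x.2
      obtain ⟨hyu, hyv⟩ := key y y.2
      simp [insertEquiv, pA_xy hxu hxv hyu hyv, hM, hA]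
    · obtain ⟨hxu, hxv⟩ := key x x.2
      simp [insertEquiv, pA_xu h hxu hxv, hcb, hA]
    · obtain ⟨hyu, hyv⟩ := key y y.2
      simp [insertEquiv, hrb]
      exact pA_uy h hyu hyv
    · simp [insertEquiv, aM_self]
  have h2 : gdet G (insert v Z) =
      (fromBlocks MZ cb rb (0 : Matrix Unit Unit (ZMod 2))).det := by
    rw [gdet_eq, ← Matrix.det_submatrix_equiv_self (insertEquiv Z v hv)]
    congr 1
    ext i j
    rcases i with x | i <;> rcases j with y | j
    · simp [insertEquiv, hMZ, hA]
    · simp [insertEquiv, hcb, hA]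
    · simp [insertEquiv, hrb]
      exact aM_comm _ _ _
    · simp [insertEquiv, aM_self]
  have h3 : fromBlocks M cb rb (0 : Matrix Unit Unit (ZMod 2)) =
      fromBlocks (1 : Matrix Z Z (ZMod 2)) ca 0 (1 : Matrix Unit Unit (ZMod 2)) *
        fromBlocks MZ cb rb 0 *
        fromBlocks (1 : Matrix Z Z (ZMod 2)) 0 ra (1 : Matrix Unit Unit (ZMod 2)) := by
    have hM' : M = MZ + ca * rb + cb * ra := by
      ext x y
      simp only [Matrix.add_apply, Matrix.mul_apply, Finset.univ_unique, Finset.sum_singleton,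
        hM, hMZ, hca, hcb, hra, hrb, Matrix.of_apply]
    rw [Matrix.fromBlocks_multiply, Matrix.fromBlocks_multiply]
    simp only [Matrix.one_mul, Matrix.mul_one, Matrix.zero_mul, Matrix.mul_zero,
      add_zero, zero_add]
    rw [← hM']
  have d1 : (fromBlocks (1 : Matrix Z Z (ZMod 2)) ca 0 (1 : Matrix Unit Unit (ZMod 2))).det = 1 := by
    rw [Matrix.det_fromBlocks_zero₂₁, Matrix.det_one, Matrix.det_one, one_mul]
  have d2 : (fromBlocks (1 : Matrix Z Z (ZMod 2)) 0 ra (1 : Matrix Unit Unit (ZMod 2))).det = 1 := by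
    rw [Matrix.det_fromBlocks_zero₁₂, Matrix.det_one, Matrix.det_one, one_mul]
  rw [h1, h2, h3, Matrix.det_mul, Matrix.det_mul, d1, d2, one_mul, mul_one]

lemma case1 (h : G.Adj u v) (Z : Finset V) (hu : u ∉ Z) (hv : v ∉ Z) :
    gdet (G.pivot u v) Z = gdet G (insert u (insert v Z)) := by
  have h' : (G.pivot u v).Adj u v := pivot_adj_uv h
  have := case2 h' Z hu hv
  rw [gdet_congr (pivot_pivot_adj h)] at this
  exact this.symm

lemma case4 (h : G.Adj u v) (Z : Finset V) (hu : u ∉ Z) (hv : v ∉ Z) :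
    gdet (G.pivot u v) (insert v Z) = gdet G (insert u Z) := by
  have h' : (G.pivot u v).Adj u v := pivot_adj_uv h
  have := case3 h' Z hu hv
  rw [gdet_congr (pivot_pivot_adj h)] at this
  exact this.symm

end Cases

section Master

variable {G : SimpleGraph V} {u v : V}

lemma pivot_gdet (h : G.Adj u v) (Y : Finset V) :
    gdet (G.pivot u v) Y = gdet G (symmDiff Y {u, v}) := by
  have hne : u ≠ v := G.ne_of_adj h
  by_cases hu : u ∈ Y <;> by_cases hv : v ∈ Y
  · have hS : symmDiff Y {u, v} = (Y.erase u).erase v := by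
      ext a
      simp only [Finset.mem_symmDiff, Finset.mem_insert, Finset.mem_singleton, Finset.mem_erase]
      constructor
      · rintro (⟨ha, hb⟩ | ⟨ha, hb⟩)
        · push_neg at hb; exact ⟨hb.2, hb.1, ha⟩
        · rcases ha with rfl | rfl <;> exact absurd hb (by simp [hu, hv])
      · rintro ⟨h1, h2, h3⟩; exact Or.inl ⟨h3, by tauto⟩
    have hY : Y = insert u (insert v ((Y.erase u).erase v)) := by
      ext a
      simp only [Finset.mem_insert, Finset.mem_erase]
      constructor
      · intro ha
        by_cases h1 : a = u
        · exact Or.inl h1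
        by_cases h2 : a = v
        · exact Or.inr (Or.inl h2)
        · exact Or.inr (Or.inr ⟨h2, h1, ha⟩)
      · rintro (rfl | rfl | ⟨-, -, ha⟩) <;> assumption
    rw [hS]
    conv_lhs => rw [hY]
    exact case2 h _ (fun hc => Finset.notMem_erase u Y (Finset.mem_of_mem_erase hc))
      (Finset.notMem_erase v _)
  · have hS : symmDiff Y {u, v} = insert v (Y.erase u) := by
      ext a
      simp only [Finset.mem_symmDiff, Finset.mem_insert, Finset.mem_singleton, Finset.mem_erase]
      constructor
      · rintro (⟨ha, hb⟩ | ⟨ha, hb⟩)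
        · push_neg at hb; exact Or.inr ⟨hb.1, ha⟩
        · rcases ha with rfl | rfl
          · exact absurd hu hb
          · exact Or.inl rfl
      · rintro (rfl | ⟨h1, h2⟩)
        · exact Or.inr ⟨Or.inr rfl, hv⟩
        · exact Or.inl ⟨h2, by rintro (rfl | rfl); exacts [h1 rfl, hv h2]⟩
    have hY : Y = insert u (Y.erase u) := (Finset.insert_erase hu).symm
    rw [hS]
    conv_lhs => rw [hY]
    exact case3 h _ (Finset.notMem_erase u Y) (fun hc => hv (Finset.mem_of_mem_erase hc))
  · have hS : symmDiff Y {u, v} = insert u (Y.erase v) := by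
      ext a
      simp only [Finset.mem_symmDiff, Finset.mem_insert, Finset.mem_singleton, Finset.mem_erase]
      constructor
      · rintro (⟨ha, hb⟩ | ⟨ha, hb⟩)
        · push_neg at hb; exact Or.inr ⟨hb.2, ha⟩
        · rcases ha with rfl | rfl
          · exact Or.inl rfl
          · exact absurd hv hb
      · rintro (rfl | ⟨h1, h2⟩)
        · exact Or.inr ⟨Or.inl rfl, hu⟩
        · exact Or.inl ⟨h2, by rintro (rfl | rfl); exacts [hu h2, h1 rfl]⟩
    have hY : Y = insert v (Y.erase v) := (Finset.insert_erase hv).symm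
    rw [hS]
    conv_lhs => rw [hY]
    exact case4 h _ (fun hc => hu (Finset.mem_of_mem_erase hc)) (Finset.notMem_erase v Y)
  · have hS : symmDiff Y {u, v} = insert u (insert v Y) := by
      ext a
      simp only [Finset.mem_symmDiff, Finset.mem_insert, Finset.mem_singleton]
      constructor
      · rintro (⟨ha, hb⟩ | ⟨ha, hb⟩)
        · exact Or.inr (Or.inr ha)
        · tauto
      · rintro (rfl | rfl | ha)
        · exact Or.inr (by simp [hu])
        · exact Or.inr (by simp [hv])
        · exact Or.inl ⟨ha, by rintro (rfl | rfl) <;> tauto⟩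
    rw [hS]
    exact case1 h _ hu hv

lemma support_cons (p : V × V) (φ : List (V × V)) (hne : p.1 ≠ p.2) :
    pivotSupport (p :: φ) = symmDiff (pivotSupport φ) {p.1, p.2} := by
  ext x
  simp only [pivotSupport, Finset.mem_filter, Finset.mem_univ, true_and, Finset.mem_symmDiff,
    List.flatMap_cons, List.count_append, List.count_cons, List.count_nil, Finset.mem_insert,
    Finset.mem_singleton, Nat.odd_iff]
  by_cases h1 : x = p.1 <;> by_cases h2 : x = p.2 <;>
    simp [h1, h2, hne, Ne.symm] <;> omega

end Master

end AuxProof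

/-- If `φ` is applicable to `G` with support `S`, then `det(G[S]) = 1`. -/
theorem gdet_support_eq_one (G : SimpleGraph V) (φ : List (V × V))
    (h : PivotsApplicable G φ) :
    gdet G (pivotSupport φ) = 1 := by
  induction φ generalizing G with
  | nil =>
      have hemp : pivotSupport ([] : List (V × V)) = (∅ : Finset V) := by
        ext x; simp [pivotSupport]
      rw [hemp, gdet_eq]
      haveI : IsEmpty ((∅ : Finset V) : Type _) := by
        exact ⟨fun x => Finset.notMem_empty x.1 x.2⟩
      exact Matrix.det_isEmpty
  | cons p φ ih =>
      obtain ⟨hadj, happ⟩ := h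
      rw [support_cons p φ hadj.ne, ← pivot_gdet hadj]
      exact ih _ happ
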